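/- Let Γ be a finite set of complex numbers such that for every α ∈ Γ there exists β ∈ Γ with α - β̄ ∈ M, where M = {2πi⟨k,ω⟩ : k ∈ ℤ^d}. Define α ~linked~ β iff α - β̄ ∈ M, and chain-linked as the transitive closure via chains. Then: an element α ∈ Γ is linked to itself (i.e. α - ᾱ ∈ M) if and only if the chain-linked equivalence class of α contains a loop of odd length. -/

import Mathlib

open Complex

/-- `α` and `β` are linked: `α - β̄ ∈ M = {2πi⟨k,ω⟩ : k ∈ ℤ^d}`. -/
def Linked {d : ℕ} (ω : Fin d → ℝ) (α β : ℂ) : Prop :=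
  ∃ k : Fin d → ℤ, α - (starRingEnd ℂ) β =
    2 * Real.pi * Complex.I * (∑ i, (k i : ℝ) * ω i)

/-- A chain in `Γ`: a nonempty list of elements of `Γ` with consecutive elements linked. -/
def IsChainIn {d : ℕ} (ω : Fin d → ℝ) (Γ : Finset ℂ) (c : List ℂ) : Prop :=
  c ≠ [] ∧ (∀ x ∈ c, x ∈ Γ) ∧ c.Chain' (Linked ω)

/-- `α` and `β` are chain-linked in `Γ`: there is a chain from `α` to `β`. -/
def ChainLinked {d : ℕ} (ω : Fin d → ℝ) (Γ : Finset ℂ) (α β : ℂ) : Prop :=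
  ∃ c : List ℂ, IsChainIn ω Γ c ∧ c.head? = some α ∧ c.getLast? = some β

/-- `x` belongs to `2π⟨ℤ^d, ω⟩`. -/
def PMem {d : ℕ} (ω : Fin d → ℝ) (x : ℝ) : Prop :=
  ∃ k : Fin d → ℤ, x = 2 * Real.pi * ∑ i, (k i : ℝ) * ω i

lemma PMem_comb {d : ℕ} {ω : Fin d → ℝ} {u v : ℝ} (m n : ℤ)
    (hu : PMem ω u) (hv : PMem ω v) : PMem ω (m * u + n * v) := by
  obtain ⟨k, hk⟩ := hu
  obtain ⟨l, hl⟩ := hv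
  refine ⟨fun i => m * k i + n * l i, ?_⟩
  subst hk hl
  push_cast
  rw [Finset.sum_congr rfl (fun i _ => by ring :
    ∀ i ∈ Finset.univ, ((m * k i + n * l i : ℝ)) * ω i = m * (k i * ω i) + n * (l i * ω i)),
    Finset.sum_add_distrib, ← Finset.mul_sum, ← Finset.mul_sum]
  ring

lemma linked_iff {d : ℕ} {ω : Fin d → ℝ} {α β : ℂ} :
    Linked ω α β ↔ α.re = β.re ∧ PMem ω (α.im + β.im) := by
  constructor
  · rintro ⟨k, h⟩
    have hre := congrArg Complex.re h
    have him := congrArg Complex.im h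
    simp at hre him
    exact ⟨by linarith, ⟨k, him⟩⟩
  · rintro ⟨hre, k, him⟩
    refine ⟨k, ?_⟩
    apply Complex.ext
    · simp [hre]
    · simpa using him

/-- Key chain lemma: along a chain, real parts agree and the alternating relation on
imaginary parts holds. -/
lemma chain_key {d : ℕ} {ω : Fin d → ℝ} :
    ∀ (c : List ℂ) (a b : ℂ), c.Chain' (Linked ω) → c.head? = some a →
      c.getLast? = some b →
      a.re = b.re ∧ PMem ω (a.im - (-1 : ℝ) ^ (c.length - 1) * b.im)
  | [], a, b => by simp
  | [x], a, b => by
    intro _ ha hb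
    simp at ha hb
    subst ha; subst hb
    exact ⟨rfl, ⟨0, by simp⟩⟩
  | x :: y :: rest, a, b => by
    intro hch ha hb
    simp at ha
    subst ha
    rw [List.Chain', List.isChain_cons_cons] at hch
    obtain ⟨hxy, hch⟩ := hch
    have hb' : (y :: rest).getLast? = some b := by
      rw [← hb]; exact List.getLast?_cons_cons.symm
    obtain ⟨hre, him⟩ := chain_key (y :: rest) y b hch rfl hb'
    rw [linked_iff] at hxy
    obtain ⟨hre', him'⟩ := hxy
    refine ⟨hre'.trans hre, ?_⟩
    have : x.im - (-1 : ℝ) ^ ((x :: y :: rest).length - 1) * b.im =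
        (1 : ℤ) * (x.im + y.im) + (-1 : ℤ) * (y.im - (-1 : ℝ) ^ ((y :: rest).length - 1) * b.im) := by
      simp only [List.length_cons, Nat.add_sub_cancel]
      push_cast
      ring
    rw [this]
    exact PMem_comb 1 (-1) him' him

/-- Under the hypothesis that every element of `Γ` is linked to some element
of `Γ`, an element `α ∈ Γ` is linked to itself iff its chain-linked equivalence class
contains a loop of odd length. (A loop of length `c.length - 1 ≥ 1` is a chain whose first
and last elements coincide.) -/
theorem linked_self_iff_odd_loop
    (d : ℕ) (ω : Fin d → ℝ)
    (hω : ∀ k : Fin d → ℤ, (∑ i, (k i : ℝ) * ω i) = 0 → k = 0)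
    (Γ : Finset ℂ)
    (hstar : ∀ α ∈ Γ, ∃ β ∈ Γ, Linked ω α β)
    (α : ℂ) (hα : α ∈ Γ) :
    Linked ω α α ↔
      ∃ γ : ℂ, ChainLinked ω Γ α γ ∧
        ∃ c : List ℂ, IsChainIn ω Γ c ∧ c.head? = some γ ∧ c.getLast? = some γ ∧
          2 ≤ c.length ∧ Odd (c.length - 1) := by
  constructor
  · intro h
    refine ⟨α, ⟨[α], ⟨by simp, by simpa, List.isChain_singleton α⟩, by simp, by simp⟩,
      [α, α], ⟨by simp, by simpa using hα, List.isChain_pair.mpr h⟩, by simp, by simp, by simp,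
      by simp⟩
  · rintro ⟨γ, ⟨c₁, ⟨_, _, hch₁⟩, hh₁, hl₁⟩, c, ⟨_, _, hch⟩, hh, hl, hlen, hodd⟩
    obtain ⟨hreγ, himγ⟩ := chain_key c γ γ hch hh hl
    rw [Odd.neg_one_pow hodd] at himγ
    obtain ⟨hreα, himα⟩ := chain_key c₁ α γ hch₁ hh₁ hl₁
    rw [linked_iff]
    refine ⟨rfl, ?_⟩
    rcases Nat.even_or_odd (c₁.length - 1) with hp | hp
    · rw [Even.neg_one_pow hp] at himα
      have : α.im + α.im = (2 : ℤ) * (α.im - 1 * γ.im) + (1 : ℤ) * (γ.im - -1 * γ.im) := by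
        push_cast; ring
      rw [this]
      exact PMem_comb 2 1 himα himγ
    · rw [Odd.neg_one_pow hp] at himα
      have : α.im + α.im = (2 : ℤ) * (α.im - -1 * γ.im) + (-1 : ℤ) * (γ.im - -1 * γ.im) := by
        push_cast; ring
      rw [this]
      exact PMem_comb 2 (-1) himα himγ
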